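/- Sufficiency construction for NIAC: given utilities {r_m} and scalars {c_m} satisfying the NIAC inequalities, define the information cost Z(B) = max_{m} ( c_m + J(B, r_m) − J(B'_m, r_m) ). Then Z is convex (as a pointwise maximum of convex functions), Z(B'_m) = c_m for each m, and each revealed strategy B'_m maximizes J(B, r_m) − Z(B) over all attention strategies B. -/

import Mathlib

open Finset

/-- The maximal expected utility functional of an attention strategy,
`J(B, r) = ∑_y max_u ∑_x r(x,u) B(y|x) π₀(x)`. -/
noncomputable def maxExpUtility {X Y U : Type*} [Fintype X] [Fintype Y] [Fintype U]
    [Nonempty U] (π0 : X → ℝ) (r : X → U → ℝ) (B : X → Y → ℝ) : ℝ :=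
  ∑ y, Finset.univ.sup' Finset.univ_nonempty
    (fun u : U => ∑ x, r x u * B x y * π0 x)

/-- A row-stochastic matrix (attention strategy). -/
def IsStochastic {X Y : Type*} [Fintype Y] (B : X → Y → ℝ) : Prop :=
  (∀ x y, 0 ≤ B x y) ∧ ∀ x, ∑ y, B x y = 1

lemma convexOn_finset_sup' {E : Type*} [AddCommMonoid E] [Module ℝ E]
    {ι : Type*} {s : Finset ι} (hs : s.Nonempty) (f : ι → E → ℝ)
    (hf : ∀ i ∈ s, ConvexOn ℝ Set.univ (f i)) :
    ConvexOn ℝ Set.univ (fun x => s.sup' hs (fun i => f i x)) := by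
  induction hs using Finset.Nonempty.cons_induction with
  | singleton i =>
    simp only [Finset.sup'_singleton]
    exact hf i (by simp)
  | cons i t hit ht ih =>
    have heq : (fun x => (Finset.cons i t hit).sup' (Finset.cons_nonempty hit)
        (fun j => f j x)) = fun x => (f i x) ⊔ (t.sup' ht (fun j => f j x)) :=
      funext fun x => Finset.sup'_cons ht _
    rw [heq]
    exact (hf i (by simp)).sup (ih fun j hj => hf j (Finset.mem_cons_of_mem hj))

lemma convexOn_finset_sum {E : Type*} [AddCommMonoid E] [Module ℝ E]
    {ι : Type*} (s : Finset ι) (f : ι → E → ℝ)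
    (hf : ∀ i ∈ s, ConvexOn ℝ Set.univ (f i)) :
    ConvexOn ℝ Set.univ (fun x => ∑ i ∈ s, f i x) := by
  induction s using Finset.cons_induction with
  | empty => simpa using convexOn_const (0:ℝ) convex_univ
  | cons a t hat ih =>
    simp only [Finset.sum_cons]
    exact (hf a (by simp)).add (ih fun j hj => hf j (Finset.mem_cons_of_mem hj))

lemma convexOn_maxExpUtility {X Y U : Type*} [Fintype X] [Fintype Y] [Fintype U]
    [Nonempty U] (π0 : X → ℝ) (r : X → U → ℝ) :
    ConvexOn ℝ Set.univ (fun B : X → Y → ℝ => maxExpUtility π0 r B) := by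
  unfold maxExpUtility
  refine convexOn_finset_sum _ _ (fun y _ => ?_)
  refine convexOn_finset_sup' _ _ (fun u _ => ?_)
  refine ⟨convex_univ, fun B1 _ B2 _ a b _ _ _ => le_of_eq ?_⟩
  simp only [Pi.add_apply, Pi.smul_apply, smul_eq_mul, Finset.mul_sum,
    ← Finset.sum_add_distrib]
  exact Finset.sum_congr rfl fun x _ => by ring

/-- **Sufficiency construction for NIAC.**  Given utilities `r m` and scalars
`c m` satisfying the NIAC inequalities, the information cost
`Z(B) = max_m ( c_m + J(B, r_m) − J(B'_m, r_m) )` is convex, satisfies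
`Z(B'_m) = c_m`, and each revealed strategy `B'_m` maximizes
`J(B, r_m) − Z(B)` over all attention strategies `B`. -/
theorem niac_sufficiency_construction
    {M X U : Type*} [Fintype M] [Nonempty M] [Fintype X] [Fintype U] [Nonempty U]
    (π0 : X → ℝ) (hnonneg : ∀ x, 0 ≤ π0 x) (hsum : ∑ x, π0 x = 1)
    (r : M → X → U → ℝ) (c : M → ℝ)
    (B' : M → X → U → ℝ) (hB' : ∀ m, IsStochastic (B' m))
    (hniac : ∀ l m : M,
      maxExpUtility π0 (r m) (B' l) - c l ≤
        maxExpUtility π0 (r m) (B' m) - c m)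
    (Z : (X → U → ℝ) → ℝ)
    (hZ : ∀ B, Z B = Finset.univ.sup' Finset.univ_nonempty
      (fun m : M => c m + maxExpUtility π0 (r m) B - maxExpUtility π0 (r m) (B' m))) :
    ConvexOn ℝ Set.univ Z ∧
    (∀ m, Z (B' m) = c m) ∧
    (∀ m, ∀ B : X → U → ℝ, IsStochastic B →
      maxExpUtility π0 (r m) B - Z B ≤
        maxExpUtility π0 (r m) (B' m) - Z (B' m)) := by
  have hZeq : ∀ m, Z (B' m) = c m := by
    intro m
    rw [hZ]
    apply le_antisymm
    · refine Finset.sup'_le _ _ (fun l _ => ?_)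
      have := hniac m l
      linarith
    · refine Finset.le_sup'_of_le _ (Finset.mem_univ m) ?_
      simp
  refine ⟨?_, hZeq, ?_⟩
  · have : ConvexOn ℝ Set.univ (fun B : X → U → ℝ =>
        Finset.univ.sup' Finset.univ_nonempty
          (fun m : M => c m + maxExpUtility π0 (r m) B - maxExpUtility π0 (r m) (B' m))) := by
      refine convexOn_finset_sup' _ _ (fun m _ => ?_)
      have h := (convexOn_maxExpUtility (Y := U) π0 (r m)).add_const
        (c m - maxExpUtility π0 (r m) (B' m))
      refine h.congr (fun B _ => ?_)
      simp only [Pi.add_apply]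
      ring
    exact this.congr (fun B _ => (hZ B).symm)
  · intro m B _
    have h1 : c m + maxExpUtility π0 (r m) B - maxExpUtility π0 (r m) (B' m) ≤ Z B := by
      rw [hZ]
      exact Finset.le_sup' (fun l : M => c l + maxExpUtility π0 (r l) B -
        maxExpUtility π0 (r l) (B' l)) (Finset.mem_univ m)
    rw [hZeq m]
    linarith
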